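/- Let Λ be a commutative ring in which p^{i+1} = 0, and let γ be an element of a commutative Λ-algebra with t = γ - 1. Then γ^{p^{n+i}} - 1 = t^{p^n} · Σ_{k=1}^{p^i} C(p^{n+i}, k·p^n) · t^{p^n(k-1)}, i.e., γ^{p^{n+i}} - 1 is divisible by (γ-1)^{p^n}. -/

import Mathlib

private lemma key_dvd (p i n : ℕ) (hp : p.Prime) {k : ℕ} (hk0 : k ≠ 0) (hkn : k ≤ p ^ (n + i))
    (hnd : ¬ p ^ n ∣ k) : p ^ (i + 1) ∣ (p ^ (n + i)).choose k := by
  apply pow_dvd_of_le_emultiplicity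
  rw [Nat.Prime.emultiplicity_choose_prime_pow hp hkn hk0]
  have hm : multiplicity p k < n := by
    by_contra h
    exact hnd (pow_dvd_of_le_multiplicity (le_of_not_gt h))
  have : i + 1 ≤ n + i - multiplicity p k := by omega
  exact_mod_cast Nat.cast_le.2 this


/-- If `p^(i+1) = 0` in a commutative ring `Λ` and `γ` is an element of a commutative
`Λ`-algebra `A`, with `t = γ - 1`, then
`γ^(p^(n+i)) - 1 = t^(p^n) * ∑_{k=1}^{p^i} C(p^(n+i), k·p^n) t^(p^n (k-1))`;
in particular `γ^(p^(n+i)) - 1` is divisible by `(γ-1)^(p^n)`. -/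
theorem pow_sub_one_eq (p i n : ℕ) (hp : p.Prime) (hn : 1 ≤ n)
    (Λ : Type*) [CommRing Λ] (hΛ : (p : Λ) ^ (i + 1) = 0)
    (A : Type*) [CommRing A] [Algebra Λ A] (γ : A) :
    γ ^ (p ^ (n + i)) - 1 =
      (γ - 1) ^ (p ^ n) *
        ∑ k ∈ Finset.Icc 1 (p ^ i),
          (Nat.choose (p ^ (n + i)) (k * p ^ n) : A) * (γ - 1) ^ (p ^ n * (k - 1)) ∧
    (γ - 1) ^ (p ^ n) ∣ (γ ^ (p ^ (n + i)) - 1) := by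
  set t : A := γ - 1 with ht
  set m := p ^ (n + i) with hm
  have hpA : (p : A) ^ (i + 1) = 0 := by
    have : ((p : Λ) ^ (i + 1) : Λ) = (p : Λ) ^ (i + 1) := rfl
    calc (p : A) ^ (i + 1) = algebraMap Λ A ((p : Λ) ^ (i + 1)) := by
          rw [map_pow, map_natCast]
      _ = 0 := by rw [hΛ, map_zero]
  -- vanishing of choose coefficients
  have hvanish : ∀ k ∈ Finset.Icc 1 m, ¬ p ^ n ∣ k → ((m.choose k : A) = 0) := by
    intro k hk hnd
    rw [Finset.mem_Icc] at hk
    obtain ⟨c, hc⟩ := key_dvd p i n hp (by omega) hk.2 hnd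
    rw [hc, Nat.cast_mul, Nat.cast_pow, hpA, zero_mul]
  -- binomial expansion
  have hexp : γ ^ m - 1 = ∑ k ∈ Finset.Icc 1 m, (m.choose k : A) * t ^ k := by
    have hγ : γ = t + 1 := by ring
    rw [hγ, add_pow]
    have h0 : Finset.Icc 1 m = (Finset.range (m + 1)).erase 0 := by
      ext x; simp only [Finset.mem_Icc, Finset.mem_erase, Finset.mem_range, Nat.lt_succ_iff]; omega
    rw [h0, Finset.sum_erase_eq_sub (by simp)]
    simp [mul_comm]
  -- reindex to multiples of p^n
  have himg : ∑ k ∈ Finset.Icc 1 m, (m.choose k : A) * t ^ k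
      = ∑ j ∈ Finset.Icc 1 (p ^ i), (m.choose (j * p ^ n) : A) * t ^ (j * p ^ n) := by
    rw [← Finset.sum_image (f := fun k => (m.choose k : A) * t ^ k)
      (g := fun j => j * p ^ n) (by intro a _ b _ h; exact Nat.eq_of_mul_eq_mul_right (Nat.pow_pos hp.pos) h)]
    apply (Finset.sum_subset ?_ ?_).symm
    · intro x hx
      simp only [Finset.mem_image, Finset.mem_Icc] at hx ⊢
      obtain ⟨j, hj, rfl⟩ := hx
      constructor
      · exact Nat.mul_pos hj.1 (Nat.pow_pos hp.pos)
      · calc j * p ^ n ≤ p ^ i * p ^ n := Nat.mul_le_mul_right _ hj.2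
          _ = m := by rw [hm, ← pow_add]; ring_nf
    · intro x hx hnx
      apply mul_eq_zero_of_left
      apply hvanish x hx
      intro hd
      obtain ⟨j, rfl⟩ := hd
      apply hnx
      simp only [Finset.mem_image, Finset.mem_Icc]
      rw [Finset.mem_Icc] at hx
      refine ⟨j, ⟨?_, ?_⟩, by ring⟩
      · rcases Nat.eq_zero_or_pos j with rfl | h
        · simp at hx
        · exact h
      · by_contra h
        push_neg at h
        have h2 : p ^ i * p ^ n < j * p ^ n :=
          (Nat.mul_lt_mul_right (Nat.pow_pos hp.pos)).2 h
        rw [← pow_add, Nat.add_comm i n, Nat.mul_comm j] at h2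
        omega
  have heq : γ ^ m - 1 = t ^ (p ^ n) *
      ∑ k ∈ Finset.Icc 1 (p ^ i), (m.choose (k * p ^ n) : A) * t ^ (p ^ n * (k - 1)) := by
    rw [hexp, himg, Finset.mul_sum]
    apply Finset.sum_congr rfl
    intro j hj
    rw [Finset.mem_Icc] at hj
    have : j * p ^ n = p ^ n + p ^ n * (j - 1) := by
      cases j with
      | zero => omega
      | succ j => simp [Nat.mul_comm, Nat.mul_succ, Nat.add_comm]
    rw [this, pow_add]; ring
  exact ⟨heq, heq ▸ Dvd.intro _ rfl⟩
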